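/- Assume the rearrangement setup with R a finite poset, X convex in R, no walk in R starting in M and ending in Y and none starting in Y and ending in M, β a bijective homomorphism from R|_X to R|_Y, and for all x ∈ X: N^in_R(x) \ M ⊆ N^in_R(β(x)) and N^out_R(x) \ M ⊆ N^out_R(β(x)). Then the transitive hull T of S is a finite poset and R ⊑_Γ T with respect to the class of all finite digraphs. -/

import Mathlib

/-- A homomorphism between digraphs `(V, A)` and `(W, B)`:
a map sending every arc to an arc. -/
def IsHom {V W : Type} (A : V → V → Prop) (B : W → W → Prop) (f : V → W) : Prop :=
  ∀ ⦃v w : V⦄, A v w → B (f v) (f w)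

/-- A strict homomorphism: a homomorphism mapping proper arcs to proper arcs. -/
def IsStrictHom {V W : Type} (A : V → V → Prop) (B : W → W → Prop) (f : V → W) : Prop :=
  IsHom A B f ∧ ∀ ⦃v w : V⦄, A v w → v ≠ w → f v ≠ f w

/-- Adjacency in a digraph. -/
def DAdj {V : Type} (A : V → V → Prop) (v w : V) : Prop := A v w ∨ A w v

/-- `v` and `w` are connected in `X`: `v = w` (with `v ∈ X`), or there is a line
`z 0, …, z I` inside `X` connecting them, consecutive members being adjacent. -/
def ConnIn {V : Type} (A : V → V → Prop) (X : Set V) (v w : V) : Prop :=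
  ∃ (I : ℕ) (z : ℕ → V), z 0 = v ∧ z I = w ∧ (∀ i ≤ I, z i ∈ X) ∧
    ∀ i < I, DAdj A (z i) (z (i + 1))

/-- `γ_X(v)`: the set of `w ∈ X` connected with `v` in `X`. -/
def gammaSet {V : Type} (A : V → V → Prop) (X : Set V) (v : V) : Set V :=
  {w | ConnIn A X v w}

/-- `Γ_ξ(v)`: the connectivity component of `v` in the preimage `ξ⁻¹(ξ(v))`. -/
def GammaComp {V W : Type} (A : V → V → Prop) (ξ : V → W) (v : V) : Set V :=
  gammaSet A {u | ξ u = ξ v} v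

/-- The set of homomorphisms `H(G,H)` (as a type). -/
def HomSet {V W : Type} (A : V → V → Prop) (B : W → W → Prop) : Type :=
  {f : V → W // IsHom A B f}

/-- The set of strict homomorphisms `S(G,H)` (as a type). -/
def StrictHomSet {V W : Type} (A : V → V → Prop) (B : W → W → Prop) : Type :=
  {f : V → W // IsStrictHom A B f}

/-- The vertex set of the digraph `G_ξ`: the components `Γ_ξ(v)`, `v ∈ V(G)`. -/
def GVert {V W : Type} (A : V → V → Prop) (ξ : V → W) : Type :=
  {C : Set V // ∃ v, C = GammaComp A ξ v}

/-- The arc relation of the digraph `G_ξ`. -/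
def GArc {V W : Type} (A : V → V → Prop) (ξ : V → W) :
    GVert A ξ → GVert A ξ → Prop :=
  fun C D => ∃ a ∈ C.1, ∃ b ∈ D.1, A a b

/-- The canonical map `π_ξ : G → G_ξ`, `v ↦ Γ_ξ(v)`. -/
def piMap {V W : Type} (A : V → V → Prop) (ξ : V → W) (v : V) : GVert A ξ :=
  ⟨GammaComp A ξ v, v, rfl⟩

/-- `Θ_{G,H'}(ξ)`: the homomorphisms `ζ : G → H'` with `G_ζ = G_ξ`
(equality of the digraphs `G_ζ` and `G_ξ`, i.e. of their vertex sets,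
which determines the arc sets). -/
def ThetaSet {V W W' : Type} (A : V → V → Prop) (B' : W' → W' → Prop)
    (ξ : V → W) : Set (V → W') :=
  {ζ | IsHom A B' ζ ∧
    {C : Set V | ∃ v, C = GammaComp A ζ v} = {C : Set V | ∃ v, C = GammaComp A ξ v}}

/-- `R ⊑_Γ S` with respect to a class `D'` of finite digraphs: a strong Γ-scheme
from `R` to `S` exists, i.e. for every finite digraph `G ∈ D'` an injective map
`ρ_G : H(G,R) → H(G,S)` with `Γ_{ρ_G(ξ)}(v) = Γ_ξ(v)` for all `ξ`, `v`. -/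
def SqGamma (D' : (V : Type) → (V → V → Prop) → Prop)
    {VR VS : Type} (R : VR → VR → Prop) (S : VS → VS → Prop) : Prop :=
  ∀ (V : Type) [Finite V] [Nonempty V] (A : V → V → Prop), D' V A →
    ∃ ρ : HomSet A R → HomSet A S, Function.Injective ρ ∧
      ∀ (ξ : HomSet A R) (v : V), GammaComp A (ρ ξ).1 v = GammaComp A ξ.1 v

/-- The class `T_a`: digraphs whose loop-removed digraph is acyclic,
i.e. every closed walk is trivial. -/
def Ta {V : Type} (A : V → V → Prop) : Prop :=
  ∀ (z : ℕ → V) (I : ℕ), 0 < I →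
    (∀ i < I, A (z i) (z (i + 1)) ∧ z i ≠ z (i + 1)) → z 0 ≠ z I

/-- A poset: a reflexive, antisymmetric, transitive digraph. -/
def IsPosetRel {V : Type} (A : V → V → Prop) : Prop :=
  Reflexive A ∧ AntiSymmetric A ∧ Transitive A

/-- An element of `P^*`: an irreflexive, antisymmetric, transitive digraph. -/
def IsStrictPosetRel {V : Type} (A : V → V → Prop) : Prop :=
  Irreflexive A ∧ AntiSymmetric A ∧ Transitive A

/-- The direct (disjoint) sum of two digraphs. -/
def sumRel {V W : Type} (A : V → V → Prop) (B : W → W → Prop) :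
    V ⊕ W → V ⊕ W → Prop
  | Sum.inl v, Sum.inl w => A v w
  | Sum.inr v, Sum.inr w => B v w
  | _, _ => False

/-- The open neighborhood `N(v)`. -/
def Nbr {Z : Type} (A : Z → Z → Prop) (v : Z) : Set Z :=
  {w | w ≠ v ∧ (A v w ∨ A w v)}

/-- The in-neighborhood `N^in(v)`. -/
def NIn {Z : Type} (A : Z → Z → Prop) (v : Z) : Set Z :=
  {w | w ≠ v ∧ A w v}

/-- The out-neighborhood `N^out(v)`. -/
def NOut {Z : Type} (A : Z → Z → Prop) (v : Z) : Set Z :=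
  {w | w ≠ v ∧ A v w}

/-- `A_r`: the arcs of `R` minus all arcs between `M` and `X`. -/
def ArRel {Z : Type} (A : Z → Z → Prop) (X M : Set Z) : Z → Z → Prop :=
  fun v w => A v w ∧ ¬(v ∈ M ∧ w ∈ X) ∧ ¬(v ∈ X ∧ w ∈ M)

/-- `A_d = { m β(x) : m x ∈ A(R) ∩ (M × X) }`. -/
def AdRel {Z : Type} (A : Z → Z → Prop) (X M : Set Z) (β : Z → Z) : Z → Z → Prop :=
  fun v w => v ∈ M ∧ ∃ x ∈ X, A v x ∧ w = β x

/-- `A_u = { β(x) m : x m ∈ A(R) ∩ (X × M) }`. -/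
def AuRel {Z : Type} (A : Z → Z → Prop) (X M : Set Z) (β : Z → Z) : Z → Z → Prop :=
  fun v w => w ∈ M ∧ ∃ x ∈ X, A x w ∧ v = β x

/-- The rearranged digraph `S`, with `A(S) = A_r ∪ A_d ∪ A_u`. -/
def SRel {Z : Type} (A : Z → Z → Prop) (X M : Set Z) (β : Z → Z) : Z → Z → Prop :=
  fun v w => ArRel A X M v w ∨ AdRel A X M β v w ∨ AuRel A X M β v w

/-- `U_ξ = { v : ξ(v) ∈ T and ξ[N_G(v)] ∩ M ≠ ∅ }` (for `T = X`; with `T = Y`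
this gives `U'_ζ`). -/
def USet {V Z : Type} (AG : V → V → Prop) (T M : Set Z) (ξ : V → Z) : Set V :=
  {v | ξ v ∈ T ∧ ∃ w ∈ Nbr AG v, ξ w ∈ M}

open Classical in
/-- The rearranged homomorphism `ρ_G(ξ)`: `β(ξ(v))` on `U_ξ` and `ξ(v)` elsewhere. -/
noncomputable def rhoMap {V Z : Type} (AG : V → V → Prop) (X M : Set Z) (β : Z → Z)
    (ξ : V → Z) : V → Z :=
  fun v => if v ∈ USet AG X M ξ then β (ξ v) else ξ v

/-- The auxiliary "collapsed shapes" relation used to prove antisymmetry of the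
transitive hull of `S`. -/
def QRel {Z : Type} (A : Z → Z → Prop) (X M : Set Z) (β : Z → Z) : Z → Z → Prop :=
  fun a b => A a b
    ∨ (∃ m ∈ M, ∃ x ∈ X, A a m ∧ A m x ∧ A (β x) b)
    ∨ (∃ x ∈ X, ∃ m ∈ M, A a (β x) ∧ A x m ∧ A m b)
    ∨ (∃ m ∈ M, ∃ x ∈ X, ∃ x' ∈ X, ∃ m' ∈ M,
        A a m ∧ A m x ∧ A (β x) (β x') ∧ A x' m' ∧ A m' b)

section Q
variable {Z : Type} {A : Z → Z → Prop} {X M Y : Set Z} {β : Z → Z}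

theorem SsubQ (hrefl : Reflexive A) {a b : Z}
    (h : SRel A X M β a b) : QRel A X M β a b := by
  rcases h with ⟨h, -, -⟩ | ⟨hm, x, hx, hax, rfl⟩ | ⟨hm, x, hx, hax, rfl⟩
  · exact Or.inl h
  · exact Or.inr (Or.inl ⟨a, hm, x, hx, hrefl a, hax, hrefl _⟩)
  · exact Or.inr (Or.inr (Or.inl ⟨x, hx, b, hm, hrefl _, hax, hrefl b⟩))

theorem Qtrans (htrans : Transitive A)
    (hYMa : ∀ {y m}, y ∈ Y → m ∈ M → A y m → False)
    (hMYa : ∀ {m y}, m ∈ M → y ∈ Y → A m y → False)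
    (hβY : ∀ {x}, x ∈ X → β x ∈ Y)
    (hβle : ∀ {x x'}, x ∈ X → x' ∈ X → A x x' → A (β x) (β x'))
    {a b c : Z} (h1 : QRel A X M β a b) (h2 : QRel A X M β b c) :
    QRel A X M β a c := by
  rcases h1 with hab | ⟨m,hm,x,hx,h1,h2',h3⟩ | ⟨x,hx,m,hm,h1,h2',h3⟩ |
      ⟨m,hm,x,hx,x',hx',m',hm',h1,h2',h3,h4,h5⟩ <;>
    rcases h2 with hbc | ⟨m2,hm2,x2,hx2,g1,g2,g3⟩ | ⟨x2,hx2,m2,hm2,g1,g2,g3⟩ |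
      ⟨m2,hm2,x2,hx2,x2',hx2',m2',hm2',g1,g2,g3,g4,g5⟩
  · exact Or.inl (htrans hab hbc)
  · exact Or.inr (Or.inl ⟨m2,hm2,x2,hx2, htrans hab g1, g2, g3⟩)
  · exact Or.inr (Or.inr (Or.inl ⟨x2,hx2,m2,hm2, htrans hab g1, g2, g3⟩))
  · exact Or.inr (Or.inr (Or.inr ⟨m2,hm2,x2,hx2,x2',hx2',m2',hm2',
      htrans hab g1, g2, g3, g4, g5⟩))
  · exact Or.inr (Or.inl ⟨m,hm,x,hx,h1,h2', htrans h3 hbc⟩)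
  · exact (hYMa (hβY hx) hm2 (htrans h3 g1)).elim
  · exact Or.inr (Or.inr (Or.inr ⟨m,hm,x,hx,x2,hx2,m2,hm2, h1, h2',
      htrans h3 g1, g2, g3⟩))
  · exact (hYMa (hβY hx) hm2 (htrans h3 g1)).elim
  · exact Or.inr (Or.inr (Or.inl ⟨x,hx,m,hm,h1,h2', htrans h3 hbc⟩))
  · exact Or.inl (htrans h1 (htrans
      (hβle hx hx2 (htrans (htrans h2' h3) (htrans g1 g2))) g3))
  · exact (hMYa hm (hβY hx2) (htrans h3 g1)).elim
  · exact Or.inr (Or.inr (Or.inl ⟨x2',hx2',m2',hm2',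
      htrans h1 (htrans (hβle hx hx2 (htrans (htrans h2' h3) (htrans g1 g2))) g3),
      g4, g5⟩))
  · exact Or.inr (Or.inr (Or.inr ⟨m,hm,x,hx,x',hx',m',hm',h1,h2',h3,h4, htrans h5 hbc⟩))
  · exact Or.inr (Or.inl ⟨m,hm,x,hx,h1,h2',
      htrans h3 (htrans (hβle hx' hx2 (htrans (htrans h4 h5) (htrans g1 g2))) g3)⟩)
  · exact (hMYa hm' (hβY hx2) (htrans h5 g1)).elim
  · exact Or.inr (Or.inr (Or.inr ⟨m,hm,x,hx,x2',hx2',m2',hm2', h1, h2',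
      htrans h3 (htrans (hβle hx' hx2 (htrans (htrans h4 h5) (htrans g1 g2))) g3),
      g4, g5⟩))

theorem Qanti (htrans : Transitive A) (hanti : AntiSymmetric A)
    (hXM' : ∀ {t : Z}, t ∈ X → t ∈ M → False)
    (hYMa : ∀ {y m}, y ∈ Y → m ∈ M → A y m → False)
    (hMYa : ∀ {m y}, m ∈ M → y ∈ Y → A m y → False)
    (hβY : ∀ {x}, x ∈ X → β x ∈ Y)
    (hβinj : ∀ {x x'}, x ∈ X → x' ∈ X → β x = β x' → x = x')
    (hβle : ∀ {x x'}, x ∈ X → x' ∈ X → A x x' → A (β x) (β x'))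
    {a b : Z} (hQ1 : QRel A X M β a b) (hQ2 : QRel A X M β b a) :
    a = b := by
  rcases hQ1 with hab | ⟨m,hm,x,hx,h1,h2',h3⟩ | ⟨x,hx,m,hm,h1,h2',h3⟩ |
      ⟨m,hm,x,hx,x',hx',m',hm',h1,h2',h3,h4,h5⟩ <;>
    rcases hQ2 with hba | ⟨m2,hm2,x2,hx2,g1,g2,g3⟩ | ⟨x2,hx2,m2,hm2,g1,g2,g3⟩ |
      ⟨m2,hm2,x2,hx2,x2',hx2',m2',hm2',g1,g2,g3,g4,g5⟩
  · exact hanti hab hba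
  · exact (hYMa (hβY hx2) hm2 (htrans g3 (htrans hab g1))).elim
  · exact (hMYa hm2 (hβY hx2) (htrans g3 (htrans hab g1))).elim
  · -- (0,3)
    have hxx : x2 = x2' := hβinj hx2 hx2' (hanti g3
      (hβle hx2' hx2 (htrans g4 (htrans g5 (htrans hab (htrans g1 g2))))))
    have k1 : A x2 m2' := hxx ▸ g4
    have k2 : A m2' x2 := htrans (htrans g5 (htrans hab g1)) g2
    exact (hXM' hx2 ((hanti k1 k2) ▸ hm2')).elim
  · exact (hYMa (hβY hx) hm (htrans h3 (htrans hba h1))).elim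
  · exact (hYMa (hβY hx) hm2 (htrans h3 g1)).elim
  · -- (1,2)
    have hxx : x = x2 := hβinj hx hx2 (hanti (htrans h3 g1)
      (hβle hx2 hx (htrans g2 (htrans g3 (htrans h1 h2')))))
    have k1 : A x m2 := hxx ▸ g2
    have k2 : A m2 x := htrans g3 (htrans h1 h2')
    exact (hXM' hx ((hanti k1 k2) ▸ hm2)).elim
  · exact (hYMa (hβY hx) hm2 (htrans h3 g1)).elim
  · exact (hMYa hm (hβY hx) (htrans h3 (htrans hba h1))).elim
  · -- (2,1)
    have hxx : x2 = x := hβinj hx2 hx (hanti (htrans g3 h1)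
      (hβle hx hx2 (htrans h2' (htrans h3 (htrans g1 g2)))))
    have k1 : A x m2 := htrans h2' (htrans h3 g1)
    have k2 : A m2 x := hxx ▸ g2
    exact (hXM' hx ((hanti k1 k2) ▸ hm2)).elim
  · exact (hMYa hm (hβY hx2) (htrans h3 g1)).elim
  · -- (2,3)
    exact (hMYa hm2' (hβY hx2')
      (htrans g5 (htrans h1 (htrans
        (hβle hx hx2 (htrans h2' (htrans h3 (htrans g1 g2)))) g3)))).elim
  · -- (3,0)
    have hxx : x = x' := hβinj hx hx' (hanti h3
      (hβle hx' hx (htrans h4 (htrans h5 (htrans hba (htrans h1 h2'))))))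
    have k1 : A x m' := hxx ▸ h4
    have k2 : A m' x := htrans h5 (htrans hba (htrans h1 h2'))
    exact (hXM' hx ((hanti k1 k2) ▸ hm')).elim
  · exact (hYMa (hβY hx2) hm (htrans g3 h1)).elim
  · exact (hMYa hm' (hβY hx2) (htrans h5 g1)).elim
  · -- (3,3)
    have c1 : A (β x') (β x2) := hβle hx' hx2 (htrans h4 (htrans h5 (htrans g1 g2)))
    have c2 : A (β x2') (β x) := hβle hx2' hx (htrans g4 (htrans g5 (htrans h1 h2')))
    have hxx : x = x2' := hβinj hx hx2' (hanti (htrans h3 (htrans c1 g3)) c2)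
    have k1 : A x m2' := hxx ▸ g4
    have k2 : A m2' x := htrans g5 (htrans h1 h2')
    exact (hXM' hx ((hanti k1 k2) ▸ hm2')).elim

end Q


-- ConnIn lemmas
def stepRel {V : Type} (A : V → V → Prop) (X : Set V) (a b : V) : Prop :=
  a ∈ X ∧ b ∈ X ∧ DAdj A a b

theorem stepRel_symm {V : Type} (A : V → V → Prop) (X : Set V) :
    Symmetric (stepRel A X) := by
  intro a b ⟨ha, hb, hd⟩
  exact ⟨hb, ha, hd.symm⟩

theorem connIn_iff {V : Type} (A : V → V → Prop) (X : Set V) (v w : V) :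
    ConnIn A X v w ↔ v ∈ X ∧ Relation.ReflTransGen (stepRel A X) v w := by
  constructor
  · rintro ⟨I, z, h0, hI, hmem, hadj⟩
    have key : ∀ J, J ≤ I → Relation.ReflTransGen (stepRel A X) (z 0) (z J) := by
      intro J hJ
      induction J with
      | zero => exact Relation.ReflTransGen.refl
      | succ n ih =>
        exact (ih (Nat.le_of_succ_le hJ)).tail
          ⟨hmem n (Nat.le_of_succ_le hJ), hmem (n+1) hJ, hadj n hJ⟩
    subst h0 hI
    exact ⟨hmem 0 (Nat.zero_le _), key I le_rfl⟩
  · rintro ⟨hv, h⟩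
    induction h with
    | refl => exact ⟨0, fun _ => v, rfl, rfl, fun i _ => hv, fun i hi => absurd hi (Nat.not_lt_zero _)⟩
    | @tail b c hab hbc ih =>
      obtain ⟨I, z, h0, hI, hmem, hadj⟩ := ih
      refine ⟨I + 1, fun i => if i ≤ I then z i else c, ?_, ?_, ?_, ?_⟩
      · simp [Nat.zero_le, h0]
      · simp
      · intro i hi
        by_cases h : i ≤ I
        · simpa [h] using hmem i h
        · simpa [h] using hbc.2.1
      · intro i hi
        rcases Nat.lt_succ_iff_lt_or_eq.mp hi with h | h
        · have h1 : i ≤ I := Nat.le_of_lt h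
          have h2 : i + 1 ≤ I := h
          simpa [h1, h2] using hadj i h
        · subst h
          have : ¬ (i + 1 ≤ i) := by omega
          simpa [le_refl, this, hI] using hbc.2.2

theorem connIn_mem {V : Type} {A : V → V → Prop} {X : Set V} {v w : V}
    (h : ConnIn A X v w) : v ∈ X ∧ w ∈ X := by
  obtain ⟨I, z, h0, hI, hmem, _⟩ := h
  exact ⟨h0 ▸ hmem 0 (Nat.zero_le _), hI ▸ hmem I le_rfl⟩

theorem connIn_refl {V : Type} {A : V → V → Prop} {X : Set V} {v : V} (hv : v ∈ X) :
    ConnIn A X v v :=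
  (connIn_iff A X v v).mpr ⟨hv, Relation.ReflTransGen.refl⟩

theorem connIn_symm {V : Type} {A : V → V → Prop} {X : Set V} {v w : V}
    (h : ConnIn A X v w) : ConnIn A X w v := by
  have hw := (connIn_mem h).2
  rw [connIn_iff] at h ⊢
  haveI : Std.Symm (stepRel A X) := ⟨stepRel_symm A X⟩
  exact ⟨hw, Relation.ReflTransGen.symmetric.symm _ _ h.2⟩

theorem connIn_trans {V : Type} {A : V → V → Prop} {X : Set V} {u v w : V}
    (h1 : ConnIn A X u v) (h2 : ConnIn A X v w) : ConnIn A X u w := by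
  rw [connIn_iff] at h1 h2 ⊢
  exact ⟨h1.1, h1.2.trans h2.2⟩

theorem connIn_step {V : Type} {A : V → V → Prop} {X : Set V} {v w : V}
    (hv : v ∈ X) (hw : w ∈ X) (h : DAdj A v w) : ConnIn A X v w :=
  (connIn_iff A X v w).mpr ⟨hv, Relation.ReflTransGen.single ⟨hv, hw, h⟩⟩

-- GammaComp lemmas

theorem self_mem_gammaComp {V Z : Type} {AG : V → V → Prop} {ξ : V → Z} {v : V} :
    v ∈ GammaComp AG ξ v :=
  connIn_refl rfl

theorem mem_gammaComp_of_adj {V Z : Type} {AG : V → V → Prop} {ξ : V → Z} {v w : V}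
    (hval : ξ w = ξ v) (hadj : DAdj AG v w) : w ∈ GammaComp AG ξ v :=
  connIn_step rfl hval hadj

theorem gammaComp_spec {V Z : Type} {AG : V → V → Prop} {ξ : V → Z} {v u : V}
    (h : u ∈ GammaComp AG ξ v) : ξ u = ξ v ∧ GammaComp AG ξ u = GammaComp AG ξ v := by
  have h' : ConnIn AG {t | ξ t = ξ v} v u := h
  have hu : ξ u = ξ v := (connIn_mem h').2
  refine ⟨hu, ?_⟩
  have hset : {t | ξ t = ξ u} = {t | ξ t = ξ v} := by ext t; simp [hu]
  ext w
  show ConnIn AG {t | ξ t = ξ u} u w ↔ ConnIn AG {t | ξ t = ξ v} v w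
  rw [hset]
  exact ⟨fun hw => connIn_trans h' hw, fun hw => connIn_trans (connIn_symm h') hw⟩

-- Moved set and rho2

def MovedSet {V Z : Type} (AG : V → V → Prop) (X M : Set Z) (ξ : V → Z) : Set V :=
  {v | ξ v ∈ X ∧ ∃ u ∈ GammaComp AG ξ v, ∃ w ∈ Nbr AG u, ξ w ∈ M}

open Classical in
noncomputable def rho2 {V Z : Type} (AG : V → V → Prop) (X M : Set Z) (β : Z → Z)
    (ξ : V → Z) : V → Z :=
  fun v => if v ∈ MovedSet AG X M ξ then β (ξ v) else ξ v

theorem movedSet_congr {V Z : Type} {AG : V → V → Prop} {X M : Set Z} {ξ : V → Z} {v u : V}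
    (h : u ∈ GammaComp AG ξ v) :
    u ∈ MovedSet AG X M ξ ↔ v ∈ MovedSet AG X M ξ := by
  obtain ⟨hval, hset⟩ := gammaComp_spec h
  unfold MovedSet
  simp only [Set.mem_setOf_eq, hval, hset]

section Rho
variable {V Z : Type} {AG : V → V → Prop} {A : Z → Z → Prop} {X M Y : Set Z} {β : Z → Z}

theorem rho2_hom
    (hrefl : Reflexive A)
    (hXM' : ∀ {t : Z}, t ∈ X → t ∈ M → False)
    (hMY' : ∀ {t : Z}, t ∈ M → t ∈ Y → False)
    (hβY : ∀ {x}, x ∈ X → β x ∈ Y)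
    (hβle : ∀ {x x'}, x ∈ X → x' ∈ X → A x x' → A (β x) (β x'))
    (hOut : ∀ {x b}, x ∈ X → b ≠ x → A x b → b ∉ M → A (β x) b)
    (hIn : ∀ {x a}, x ∈ X → a ≠ x → A a x → a ∉ M → A a (β x))
    {ξ : V → Z} (hξ : IsHom AG A ξ) :
    IsHom AG (SRel A X M β) (rho2 AG X M β ξ) := by
  intro v w hvw
  unfold rho2
  by_cases hval : ξ w = ξ v
  · have hcomp : w ∈ GammaComp AG ξ v := mem_gammaComp_of_adj hval (Or.inl hvw)
    have hmv := movedSet_congr (X := X) (M := M) hcomp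
    by_cases hv : v ∈ MovedSet AG X M ξ
    · rw [if_pos hv, if_pos (hmv.mpr hv), hval]
      have hxv : ξ v ∈ X := hv.1
      exact Or.inl ⟨hβle hxv hxv (hrefl _),
        fun h => hMY' h.1 (hβY hxv), fun h => hMY' h.2 (hβY hxv)⟩
    · rw [if_neg hv, if_neg (fun h => hv (hmv.mp h))]
      exact Or.inl ⟨hξ hvw,
        fun h => hXM' (hval ▸ h.2) h.1, fun h => hXM' h.1 (hval ▸ h.2)⟩
  · have hnevw : v ≠ w := fun he => hval (by rw [he])
    by_cases hv : v ∈ MovedSet AG X M ξ <;> by_cases hw : w ∈ MovedSet AG X M ξ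
    · rw [if_pos hv, if_pos hw]
      exact Or.inl ⟨hβle hv.1 hw.1 (hξ hvw),
        fun h => hMY' h.1 (hβY hv.1), fun h => hMY' h.2 (hβY hw.1)⟩
    · rw [if_pos hv, if_neg hw]
      by_cases hm : ξ w ∈ M
      · exact Or.inr (Or.inr ⟨hm, ξ v, hv.1, hξ hvw, rfl⟩)
      · exact Or.inl ⟨hOut hv.1 hval (hξ hvw) hm,
          fun h => hMY' h.1 (hβY hv.1), fun h => hm h.2⟩
    · rw [if_neg hv, if_pos hw]
      by_cases hm : ξ v ∈ M
      · exact Or.inr (Or.inl ⟨hm, ξ w, hw.1, hξ hvw, rfl⟩)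
      · exact Or.inl ⟨hIn hw.1 (fun h => hval h.symm) (hξ hvw) hm,
          fun h => hm h.1, fun h => hMY' h.2 (hβY hw.1)⟩
    · rw [if_neg hv, if_neg hw]
      refine Or.inl ⟨hξ hvw, ?_, ?_⟩
      · rintro ⟨h1, h2⟩
        exact hw ⟨h2, w, self_mem_gammaComp, v, ⟨hnevw, Or.inr hvw⟩, h1⟩
      · rintro ⟨h1, h2⟩
        exact hv ⟨h1, v, self_mem_gammaComp, w, ⟨hnevw.symm, Or.inl hvw⟩, h2⟩

theorem rho2_gamma
    (hMY' : ∀ {t : Z}, t ∈ M → t ∈ Y → False)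
    (hβY : ∀ {x}, x ∈ X → β x ∈ Y)
    (hβinj : ∀ {x x'}, x ∈ X → x' ∈ X → β x = β x' → x = x')
    (hnadjX : ∀ {x}, x ∈ X → β x ≠ x → ¬ DAdj A x (β x))
    {ξ : V → Z} (hξ : IsHom AG A ξ) (v : V) :
    GammaComp AG (rho2 AG X M β ξ) v = GammaComp AG ξ v := by
  set ζ := rho2 AG X M β ξ with hζdef
  have hfix : ∀ {t}, t ∈ GammaComp AG ξ v → ζ t = ζ v := by
    intro t ht
    have h1 : ξ t = ξ v := (gammaComp_spec ht).1
    have h2 := movedSet_congr (X := X) (M := M) ht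
    by_cases hv : v ∈ MovedSet AG X M ξ
    · show rho2 AG X M β ξ t = rho2 AG X M β ξ v
      unfold rho2
      rw [if_pos (h2.mpr hv), if_pos hv, h1]
    · show rho2 AG X M β ξ t = rho2 AG X M β ξ v
      unfold rho2
      rw [if_neg (fun h => hv (h2.mp h)), if_neg hv, h1]
  have hadj_eq : ∀ {p q}, DAdj AG p q → ζ p = ζ q → ξ p = ξ q := by
    intro p q hadj heq
    have hDA : DAdj A (ξ p) (ξ q) := by
      rcases hadj with h | h
      · exact Or.inl (hξ h)
      · exact Or.inr (hξ h)
    rw [hζdef] at heq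
    unfold rho2 at heq
    by_cases hp : p ∈ MovedSet AG X M ξ <;> by_cases hq : q ∈ MovedSet AG X M ξ
    · rw [if_pos hp, if_pos hq] at heq
      exact hβinj hp.1 hq.1 heq
    · rw [if_pos hp, if_neg hq] at heq
      by_contra hne
      have k1 : β (ξ p) ≠ ξ p := by rw [heq]; exact fun h => hne h.symm
      have k2 : DAdj A (ξ p) (β (ξ p)) := by rw [heq]; exact hDA
      exact hnadjX hp.1 k1 k2
    · rw [if_neg hp, if_pos hq] at heq
      by_contra hne
      have k1 : β (ξ q) ≠ ξ q := by rw [← heq]; exact hne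
      have k2 : DAdj A (ξ q) (β (ξ q)) := by rw [← heq]; exact hDA.symm
      exact hnadjX hq.1 k1 k2
    · rw [if_neg hp, if_neg hq] at heq
      exact heq
  ext u
  constructor
  · intro hu
    have hu' : ConnIn AG {t | ζ t = ζ v} v u := hu
    clear hu
    rw [connIn_iff] at hu'
    obtain ⟨-, hrt⟩ := hu'
    show ConnIn AG {t | ξ t = ξ v} v u
    induction hrt with
    | refl => exact connIn_refl rfl
    | @tail b c hab hbc ih =>
      obtain ⟨hbmem, hcmem, hbc'⟩ := hbc
      have hbv : ξ b = ξ v := (connIn_mem ih).2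
      have hbceq : ξ b = ξ c := hadj_eq hbc' (hbmem.trans hcmem.symm)
      exact connIn_trans ih (connIn_step hbv (hbceq.symm.trans hbv) hbc')
  · intro hu
    have hu' : ConnIn AG {t | ξ t = ξ v} v u := hu
    clear hu
    rw [connIn_iff] at hu'
    obtain ⟨-, hrt⟩ := hu'
    show ConnIn AG {t | ζ t = ζ v} v u
    induction hrt with
    | refl => exact connIn_refl rfl
    | @tail b c hab hbc ih =>
      obtain ⟨hbmem, hcmem, hbc'⟩ := hbc
      have hbζ : ζ b = ζ v := (connIn_mem ih).2
      have hcξ : ConnIn AG {t | ξ t = ξ v} v c :=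
        (connIn_iff AG _ v c).mpr ⟨rfl, hab.tail ⟨hbmem, hcmem, hbc'⟩⟩
      have hcζ : ζ c = ζ v := hfix hcξ
      exact connIn_trans ih (connIn_step hbζ hcζ hbc')

theorem rho2_moved_iff
    (hXM' : ∀ {t : Z}, t ∈ X → t ∈ M → False)
    (hMY' : ∀ {t : Z}, t ∈ M → t ∈ Y → False)
    (hYMa : ∀ {y m}, y ∈ Y → m ∈ M → A y m → False)
    (hMYa : ∀ {m y}, m ∈ M → y ∈ Y → A m y → False)
    (hβY : ∀ {x}, x ∈ X → β x ∈ Y)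
    (hβinj : ∀ {x x'}, x ∈ X → x' ∈ X → β x = β x' → x = x')
    (hnadjX : ∀ {x}, x ∈ X → β x ≠ x → ¬ DAdj A x (β x))
    {ξ : V → Z} (hξ : IsHom AG A ξ) (v : V) :
    v ∈ MovedSet AG X M ξ ↔
      (rho2 AG X M β ξ v ∈ Y ∧ ∃ u ∈ GammaComp AG (rho2 AG X M β ξ) v,
        ∃ w ∈ Nbr AG u, rho2 AG X M β ξ w ∈ M) := by
  have hGam := rho2_gamma (AG := AG) (X := X) (M := M) hMY' hβY hβinj hnadjX hξ
  constructor
  · intro hv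
    obtain ⟨hvX, u, hu, w, hw, hwM⟩ := hv
    have hwnm : w ∉ MovedSet AG X M ξ := fun h => hXM' h.1 hwM
    refine ⟨?_, u, ?_, w, hw, ?_⟩
    · unfold rho2; rw [if_pos ⟨hvX, u, hu, w, hw, hwM⟩]; exact hβY hvX
    · rw [hGam v]; exact hu
    · unfold rho2; rw [if_neg hwnm]; exact hwM
  · rintro ⟨hY, u, hu, w, hw, hwM⟩
    have hwnm : w ∉ MovedSet AG X M ξ := by
      intro h
      have : rho2 AG X M β ξ w = β (ξ w) := by unfold rho2; rw [if_pos h]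
      exact hMY' (this ▸ hwM) (hβY h.1)
    have hwM' : ξ w ∈ M := by
      have : rho2 AG X M β ξ w = ξ w := by unfold rho2; rw [if_neg hwnm]
      exact this ▸ hwM
    rw [hGam v] at hu
    have huval : ξ u = ξ v := (gammaComp_spec hu).1
    have hmiff := movedSet_congr (X := X) (M := M) hu
    by_contra hv
    have hvval : rho2 AG X M β ξ v = ξ v := by unfold rho2; rw [if_neg hv]
    have hvY : ξ v ∈ Y := hvval ▸ hY
    have huY : ξ u ∈ Y := huval ▸ hvY
    rcases hw.2 with h | h
    · exact hYMa huY hwM' (hξ h)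
    · exact hMYa hwM' huY (hξ h)

theorem rho2_inj
    (hXM' : ∀ {t : Z}, t ∈ X → t ∈ M → False)
    (hMY' : ∀ {t : Z}, t ∈ M → t ∈ Y → False)
    (hYMa : ∀ {y m}, y ∈ Y → m ∈ M → A y m → False)
    (hMYa : ∀ {m y}, m ∈ M → y ∈ Y → A m y → False)
    (hβY : ∀ {x}, x ∈ X → β x ∈ Y)
    (hβinj : ∀ {x x'}, x ∈ X → x' ∈ X → β x = β x' → x = x')
    (hnadjX : ∀ {x}, x ∈ X → β x ≠ x → ¬ DAdj A x (β x))
    {ξ ξ' : V → Z} (hξ : IsHom AG A ξ) (hξ' : IsHom AG A ξ')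
    (h : rho2 AG X M β ξ = rho2 AG X M β ξ') : ξ = ξ' := by
  funext v
  have h1 := rho2_moved_iff (AG := AG) (β := β) hXM' hMY' hYMa hMYa hβY hβinj hnadjX hξ v
  have h2 := rho2_moved_iff (AG := AG) (β := β) hXM' hMY' hYMa hMYa hβY hβinj hnadjX hξ' v
  rw [h] at h1
  have hm : v ∈ MovedSet AG X M ξ ↔ v ∈ MovedSet AG X M ξ' := h1.trans h2.symm
  have hv : rho2 AG X M β ξ v = rho2 AG X M β ξ' v := congrFun h v
  unfold rho2 at hv
  by_cases hmv : v ∈ MovedSet AG X M ξ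
  · have hmv' := hm.mp hmv
    rw [if_pos hmv, if_pos hmv'] at hv
    exact hβinj hmv.1 hmv'.1 hv
  · have hmv' := fun hh => hmv (hm.mpr hh)
    rw [if_neg hmv, if_neg hmv'] at hv
    exact hv

end Rho


/-- Under the rearrangement setup with `R` a finite poset, `X` convex, no walk
in `R` between `M` and `Y` in either direction, and `β` a bijective
homomorphism from `R|_X` to `R|_Y` satisfying the neighborhood conditions:
the transitive hull `T` of `S` is a finite poset and `R ⊑_Γ T` with respect to
the class of all finite digraphs. -/
theorem stmt19 {Z : Type} [Finite Z] [Nonempty Z]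
    (A : Z → Z → Prop) (hposet : IsPosetRel A)
    (X M Y : Set Z) (β : Z → Z)
    (hXM : X ∩ M = ∅) (hMY : M ∩ Y = ∅)
    (hMNY : ∀ y ∈ Y, M ∩ Nbr A y = ∅)
    (hconv : ∀ (z : ℕ → Z) (I : ℕ), (∀ i < I, A (z i) (z (i + 1))) →
      z 0 ∈ X → z I ∈ X → ∀ i ≤ I, z i ∈ X)
    (hMYwalk : ¬ ∃ (z : ℕ → Z) (I : ℕ),
      (∀ i < I, A (z i) (z (i + 1))) ∧ z 0 ∈ M ∧ z I ∈ Y)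
    (hYMwalk : ¬ ∃ (z : ℕ → Z) (I : ℕ),
      (∀ i < I, A (z i) (z (i + 1))) ∧ z 0 ∈ Y ∧ z I ∈ M)
    (hbij : Set.BijOn β X Y)
    (hβhom : ∀ x ∈ X, ∀ x' ∈ X, A x x' → A (β x) (β x'))
    (hnbh : ∀ x ∈ X, NIn A x \ M ⊆ NIn A (β x) ∧ NOut A x \ M ⊆ NOut A (β x)) :
    IsPosetRel (Relation.TransGen (SRel A X M β)) ∧
    SqGamma (fun _ _ => True) A (Relation.TransGen (SRel A X M β)) := by

  obtain ⟨hrefl, hanti, htrans⟩ := hposet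
  have hXM' : ∀ {t : Z}, t ∈ X → t ∈ M → False := fun h1 h2 =>
    Set.eq_empty_iff_forall_notMem.mp hXM _ ⟨h1, h2⟩
  have hMY' : ∀ {t : Z}, t ∈ M → t ∈ Y → False := fun h1 h2 =>
    Set.eq_empty_iff_forall_notMem.mp hMY _ ⟨h1, h2⟩
  have hYMa : ∀ {y m}, y ∈ Y → m ∈ M → A y m → False := by
    intro y m hy hm h
    refine hYMwalk ⟨fun i => if i = 0 then y else m, 1, ?_, by simpa using hy, by simpa using hm⟩
    intro i hi
    have : i = 0 := by omega
    subst this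
    simpa using h
  have hMYa : ∀ {m y}, m ∈ M → y ∈ Y → A m y → False := by
    intro m y hm hy h
    refine hMYwalk ⟨fun i => if i = 0 then m else y, 1, ?_, by simpa using hm, by simpa using hy⟩
    intro i hi
    have : i = 0 := by omega
    subst this
    simpa using h
  have hβY : ∀ {x}, x ∈ X → β x ∈ Y := fun hx => hbij.mapsTo hx
  have hβinj : ∀ {x x'}, x ∈ X → x' ∈ X → β x = β x' → x = x' :=
    fun hx hx' h => hbij.injOn hx hx' h
  have hβle : ∀ {x x'}, x ∈ X → x' ∈ X → A x x' → A (β x) (β x') :=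
    fun hx hx' h => hβhom _ hx _ hx' h
  have hOut : ∀ {x b}, x ∈ X → b ≠ x → A x b → b ∉ M → A (β x) b :=
    fun hx hne h hnm => ((hnbh _ hx).2 ⟨⟨hne, h⟩, hnm⟩).2
  have hIn : ∀ {x a}, x ∈ X → a ≠ x → A a x → a ∉ M → A a (β x) :=
    fun hx hne h hnm => ((hnbh _ hx).1 ⟨⟨hne, h⟩, hnm⟩).2
  have hnadjX : ∀ {x}, x ∈ X → β x ≠ x → ¬ DAdj A x (β x) := by
    intro x hx hne hd
    have hβnm : β x ∉ M := fun h => hMY' h (hβY hx)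
    rcases hd with h | h
    · exact ((hnbh x hx).2 ⟨⟨hne, h⟩, hβnm⟩).1 rfl
    · exact ((hnbh x hx).1 ⟨⟨hne, h⟩, hβnm⟩).1 rfl
  have hQ : ∀ a b, Relation.TransGen (SRel A X M β) a b → QRel A X M β a b := by
    intro a b h
    induction h with
    | single h => exact SsubQ hrefl h
    | tail _ h ih => exact Qtrans htrans hYMa hMYa hβY hβle ih (SsubQ hrefl h)
  refine ⟨⟨?_, ?_, ?_⟩, ?_⟩
  · intro a
    exact Relation.TransGen.single
      (Or.inl ⟨hrefl a, fun h => hXM' h.2 h.1, fun h => hXM' h.1 h.2⟩)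
  · intro a b h1 h2
    exact Qanti htrans hanti hXM' hYMa hMYa hβY hβinj hβle (hQ a b h1) (hQ b a h2)
  · intro a b c h1 h2
    exact h1.trans h2
  · intro V _ _ AG _
    refine ⟨fun ξ => ⟨rho2 AG X M β ξ.1, fun v w h =>
      Relation.TransGen.single (rho2_hom hrefl hXM' hMY' hβY hβle hOut hIn ξ.2 h)⟩, ?_, ?_⟩
    · intro ξ ξ' h
      exact Subtype.ext (rho2_inj hXM' hMY' hYMa hMYa hβY hβinj hnadjX ξ.2 ξ'.2
        (congrArg Subtype.val h))
    · intro ξ v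
      exact rho2_gamma hMY' hβY hβinj hnadjX ξ.2 v
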